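/- arXiv:1411.6834 — 6 statements merged into one kernel-verified Lean document; each statement's English description precedes it below -/
import Mathlib

section
/- For α > 0, let σ₀ = √(5/3 + 5α/3 - β/3 - (2/3)√(2 + 4α - 4α² + 2(1+α)β)) with β = √(1 + 2α + 4α²), and b = (2/3)(√(6(α+1) - 2σ₀²) - σ₀/2). Then the function f(x) = (1/π)√((b-x)(x-σ₀)) (1 + (α/√(σ₀ b))·(1/x)) on [σ₀, b] is nonnegative and integrates to 1, i.e. defines a probability density on [σ₀, b]. -/
open MeasureTheory Real

set_option maxHeartbeats 1000000 in
lemma integral_semicircle_helper (s b c : ℝ) (hs : 0 < s) (hsb : s < b) :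
    ∫ x in s..b, Real.sqrt ((b - x)*(x - s)) * (1 + c * (1/x))
      = π * (b-s)^2/8 + c * (π * ((s+b)/2 - Real.sqrt (s*b))) := by
  obtain ⟨m, hm⟩ : ∃ m : ℝ, m = (s+b)/2 := ⟨_, rfl⟩
  obtain ⟨h, hh⟩ : ∃ h : ℝ, h = (b-s)/2 := ⟨_, rfl⟩
  obtain ⟨v, hv⟩ : ∃ v : ℝ, v = Real.sqrt (s*b) := ⟨_, rfl⟩
  have hh0 : 0 < h := by rw [hh]; linarith
  have hb0 : 0 < b := lt_trans hs hsb
  have hv0 : 0 < v := hv ▸ Real.sqrt_pos.2 (by positivity)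
  have hv2 : v^2 = s*b := by rw [hv]; exact Real.sq_sqrt (by positivity)
  have hbs : b - s ≠ 0 := by linarith
  obtain ⟨F, hF⟩ : ∃ F : ℝ → ℝ, F = fun y => ((y-m)/2) * Real.sqrt ((b-y)*(y-s))
      + (h^2/2) * arcsin ((y-m)/h)
      + c * (Real.sqrt ((b-y)*(y-s)) + m * arcsin ((y-m)/h)
        - v * arcsin ((m*y - v^2)/(h*y))) := ⟨_, rfl⟩
  have hderiv : ∀ x ∈ Set.Ioo s b, HasDerivAt F
      (Real.sqrt ((b - x)*(x - s)) * (1 + c * (1/x))) x := by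
    rintro x ⟨hx1, hx2⟩
    have hx0 : 0 < x := lt_trans hs hx1
    have hP : 0 < (b-x)*(x-s) := mul_pos (by linarith) (by linarith)
    obtain ⟨R, hR⟩ : ∃ R : ℝ, R = Real.sqrt ((b-x)*(x-s)) := ⟨_, rfl⟩
    have hR0 : 0 < R := hR ▸ Real.sqrt_pos.2 hP
    have hR2 : R^2 = (b-x)*(x-s) := by rw [hR]; exact Real.sq_sqrt hP.le
    have dP : HasDerivAt (fun y => (b-y)*(y-s)) (b+s-2*x) x := by
      have := (((hasDerivAt_id x).const_sub b).mul ((hasDerivAt_id x).sub_const s))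
      refine this.congr_deriv ?_
      simp only [id_eq]; ring
    have dR : HasDerivAt (fun y => Real.sqrt ((b-y)*(y-s))) ((b+s-2*x)/(2*R)) x := by
      rw [hR]; exact dP.sqrt hP.ne'
    have dA : HasDerivAt (fun y => (y-m)/h) (1/h) x :=
      ((hasDerivAt_id x).sub_const m).div_const h
    have hlt1 : (x-m)/h < 1 := by rw [div_lt_one hh0, hm, hh]; linarith
    have hgt1 : -1 < (x-m)/h := by
      rw [neg_lt, ← neg_div, div_lt_iff₀ hh0, hm, hh]; linarith
    have e1 : 1 - ((x-m)/h)^2 = ((b-x)*(x-s))/h^2 := by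
      rw [eq_div_iff (by positivity), hm, hh]; field_simp; ring
    have sqrt1 : Real.sqrt (1 - ((x-m)/h)^2) = R / h := by
      rw [e1, show (b-x)*(x-s)/h^2 = (R/h)^2 by rw [div_pow, hR2],
        Real.sqrt_sq (by positivity)]
    have darc1 : HasDerivAt (fun y => arcsin ((y-m)/h)) (h/R * (1/h)) x := by
      have := (Real.hasDerivAt_arcsin hgt1.ne' hlt1.ne).comp x dA
      refine this.congr_deriv ?_
      rw [sqrt1, one_div (R/h), inv_div]
    have dnum : HasDerivAt (fun y => m*y - v^2) m x := by
      have := ((hasDerivAt_id x).const_mul m).sub_const (v^2)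
      refine this.congr_deriv ?_
      ring
    have dden : HasDerivAt (fun y => h*y) h x := by
      have := (hasDerivAt_id x).const_mul h
      refine this.congr_deriv ?_
      ring
    have hhx : h*x ≠ 0 := by positivity
    have dg : HasDerivAt (fun y => (m*y - v^2)/(h*y))
        ((m*(h*x) - (m*x - v^2)*h)/(h*x)^2) x := dnum.div dden hhx
    have e2 : 1 - ((m*x - v^2)/(h*x))^2 = ((s*b)*((b-x)*(x-s)))/(h*x)^2 := by
      rw [eq_div_iff (by positivity), hv2, hm, hh]; field_simp; ring
    have hpos2 : 0 < 1 - ((m*x - v^2)/(h*x))^2 := by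
      rw [e2]
      exact div_pos (mul_pos (by positivity) hP) (by positivity)
    have hgl : -1 < (m*x - v^2)/(h*x) := by nlinarith [sq_nonneg ((m*x - v^2)/(h*x) + 1)]
    have hgu : (m*x - v^2)/(h*x) < 1 := by nlinarith [sq_nonneg ((m*x - v^2)/(h*x) - 1)]
    have sqrt2 : Real.sqrt (1 - ((m*x - v^2)/(h*x))^2) = v*R/(h*x) := by
      rw [e2, show (s*b)*((b-x)*(x-s))/(h*x)^2 = (v*R/(h*x))^2 by
        rw [div_pow, mul_pow v R, hR2, hv2],
        Real.sqrt_sq (by positivity)]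
    have darc2 : HasDerivAt (fun y => arcsin ((m*y - v^2)/(h*y))) (v/(x*R)) x := by
      have := (Real.hasDerivAt_arcsin hgl.ne' hgu.ne).comp x dg
      refine this.congr_deriv ?_
      rw [sqrt2]
      subst hm hh
      field_simp
      ring
    have D : HasDerivAt F
        ((1/2)*R + ((x-m)/2)*((b+s-2*x)/(2*R))
          + (h^2/2)*(h/R*(1/h))
          + c * ((b+s-2*x)/(2*R) + m*(h/R*(1/h)) - v*(v/(x*R)))) x := by
      have t1 : HasDerivAt (fun y => ((y-m)/2) * Real.sqrt ((b-y)*(y-s)))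
          ((1/2)*R + ((x-m)/2)*((b+s-2*x)/(2*R))) x := by
        have := (((hasDerivAt_id x).sub_const m).div_const 2).mul dR
        refine this.congr_deriv ?_
        simp only [id_eq]
        rw [hR]
      have t2 : HasDerivAt (fun y => (h^2/2) * arcsin ((y-m)/h))
          ((h^2/2)*(h/R*(1/h))) x := darc1.const_mul _
      have t3 : HasDerivAt (fun y => c * (Real.sqrt ((b-y)*(y-s)) + m * arcsin ((y-m)/h)
            - v * arcsin ((m*y - v^2)/(h*y))))
          (c * ((b+s-2*x)/(2*R) + m*(h/R*(1/h)) - v*(v/(x*R)))) x :=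
        ((dR.add (darc1.const_mul m)).sub (darc2.const_mul v)).const_mul c
      rw [hF]
      exact (t1.add t2).add t3
    convert D using 1
    rw [← hR]
    clear D hF
    clear dP dR dA darc1 darc2 dg dnum dden sqrt1 sqrt2 e1 e2 hpos2 hgl hgu hlt1 hgt1
    subst hm hh
    field_simp
    linear_combination (4*x + 8*c) * hR2 + (8*c) * hv2
  have hcont : ContinuousOn F (Set.Icc s b) := by
    rw [hF]
    apply ContinuousOn.add
    · apply ContinuousOn.add
      · exact (((continuous_id.sub continuous_const).div_const 2).mul
          (Real.continuous_sqrt.comp (by continuity))).continuousOn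
      · exact (continuous_const.mul (Real.continuous_arcsin.comp
          ((continuous_id.sub continuous_const).div_const h))).continuousOn
    · apply ContinuousOn.mul continuousOn_const
      apply ContinuousOn.sub
      · apply ContinuousOn.add
        · exact (Real.continuous_sqrt.comp (by continuity)).continuousOn
        · exact (continuous_const.mul (Real.continuous_arcsin.comp
            ((continuous_id.sub continuous_const).div_const h))).continuousOn
      · apply ContinuousOn.mul continuousOn_const
        apply Real.continuous_arcsin.comp_continuousOn
        apply ContinuousOn.div
        · exact (continuous_const.mul continuous_id |>.sub continuous_const).continuousOn
        · exact (continuous_const.mul continuous_id).continuousOn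
        · intro y hy
          have : 0 < y := lt_of_lt_of_le hs hy.1
          positivity
  have hint : IntervalIntegrable
      (fun x => Real.sqrt ((b - x)*(x - s)) * (1 + c * (1/x))) MeasureTheory.volume s b := by
    apply ContinuousOn.intervalIntegrable
    rw [Set.uIcc_of_le hsb.le]
    apply ContinuousOn.mul
    · exact (Real.continuous_sqrt.comp (by continuity)).continuousOn
    · apply ContinuousOn.add continuousOn_const
      apply ContinuousOn.mul continuousOn_const
      apply ContinuousOn.div continuousOn_const continuousOn_id
      intro y hy
      have : 0 < y := lt_of_lt_of_le hs hy.1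
      positivity
  have key := intervalIntegral.integral_eq_sub_of_hasDeriv_right_of_le hsb.le hcont
    (fun x hx => (hderiv x hx).hasDerivWithinAt) hint
  rw [key, hF]
  have hb1 : (b - m)/h = 1 := by
    rw [hm, hh]; field_simp; ring
  have hs1 : (s - m)/h = -1 := by
    rw [hm, hh]; field_simp; ring
  have hgb : (m*b - v^2)/(h*b) = 1 := by
    rw [hv2, hm, hh]; field_simp; ring
  have hgs : (m*s - v^2)/(h*s) = -1 := by
    rw [hv2, hm, hh]; field_simp; ring
  simp only [sub_self, mul_zero, zero_mul, Real.sqrt_zero, hb1, hs1, hgb, hgs,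
    Real.arcsin_one, Real.arcsin_neg_one]
  rw [hm, hh, hv]
  ring



set_option maxHeartbeats 1000000 in
/-- For `α > 0`, with the explicit constants `σ₀ < b`, the function
`f(x) = (1/π)√((b-x)(x-σ₀))(1 + (α/√(σ₀ b))(1/x))` is a probability density on
`[σ₀, b]`. -/
theorem genHermite_limit_density_a_zero
    (α : ℝ) (hα : 0 < α) (β σ₀ b : ℝ)
    (hβ : β = Real.sqrt (1 + 2*α + 4*α^2))
    (hσ : σ₀ = Real.sqrt (5/3 + 5*α/3 - β/3
      - (2/3) * Real.sqrt (2 + 4*α - 4*α^2 + 2*(1+α)*β)))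
    (hb : b = (2/3) * (Real.sqrt (6*(α+1) - 2*σ₀^2) - σ₀/2))
    (f : ℝ → ℝ)
    (hf : ∀ x, f x = (1/π) * Real.sqrt ((b - x)*(x - σ₀))
      * (1 + (α / Real.sqrt (σ₀ * b)) * (1/x))) :
    (∀ x ∈ Set.Icc σ₀ b, 0 ≤ f x) ∧ (∫ x in σ₀..b, f x) = 1 := by
  -- basic facts about β
  have hβnn : 0 ≤ β := hβ ▸ Real.sqrt_nonneg _
  have hβ2 : β^2 = 1 + 2*α + 4*α^2 := by rw [hβ]; exact Real.sq_sqrt (by positivity)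
  have hβge2 : 2*α ≤ β := by nlinarith [hβ2, hβnn, hα]
  have hβge1 : 1 + α ≤ β := by nlinarith [hβ2, hβnn, hα]
  -- q
  obtain ⟨q, hq⟩ : ∃ q : ℝ, q = Real.sqrt (2 + 4*α - 4*α^2 + 2*(1+α)*β) := ⟨_, rfl⟩
  have hqnn : 0 ≤ q := hq ▸ Real.sqrt_nonneg _
  have hq2 : q^2 = 2 + 4*α - 4*α^2 + 2*(1+α)*β := by
    rw [hq]; exact Real.sq_sqrt (by nlinarith [hβge2, hα])
  -- inner expression of σ₀ is positive
  have h1 : 2*(1+α)*β < 2 + 4*α + 5*α^2 := by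
    have hAB : (2+4*α+5*α^2)^2 - (2*(1+α)*β)^2 = 9*α^4 := by
      linear_combination (-4*(1+α)^2) * hβ2
    by_contra hcon
    push_neg at hcon
    have hmm := mul_self_le_mul_self (by positivity : (0:ℝ) ≤ 2+4*α+5*α^2) hcon
    nlinarith [hAB, hmm, pow_pos hα 4]
  have hβlt : β < 5 + 5*α := by nlinarith [hβ2, hβnn, hα]
  have h2q : 2*q < 5 + 5*α - β := by nlinarith [hq2, hqnn, h1, hβ2, hβlt]
  have hP0 : 0 < 5/3 + 5*α/3 - β/3 - (2/3)*q := by linarith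
  have hσpos : 0 < σ₀ := by
    rw [hσ, ← hq]; exact Real.sqrt_pos.2 (by linarith)
  have hσ2 : σ₀^2 = 5/3 + 5*α/3 - β/3 - (2/3)*q := by
    rw [hσ, ← hq]; exact Real.sq_sqrt (by linarith)
  -- σ₀^2 < 1 + α
  have hplt : σ₀^2 < 1 + α := by
    have e : 4*q^2 - (2+2*α-β)^2 = 3 + 6*α - 24*α^2 + 12*(1+α)*β := by
      linear_combination 4*hq2 - hβ2
    have h3 : 2 + 2*α < β + 2*q := by nlinarith [e, hβge2, hqnn, hα]
    nlinarith [hσ2, h3]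
  -- w
  obtain ⟨w, hw⟩ : ∃ w : ℝ, w = Real.sqrt (6*(α+1) - 2*σ₀^2) := ⟨_, rfl⟩
  have hwnn : 0 ≤ w := hw ▸ Real.sqrt_nonneg _
  have hw2 : w^2 = 6*(1+α) - 2*σ₀^2 := by
    rw [hw, show 6*(α+1) - 2*σ₀^2 = 6*(1+α) - 2*σ₀^2 by ring]
    exact Real.sq_sqrt (by nlinarith [hplt, sq_nonneg σ₀])
  have hbw : b = (2*w - σ₀)/3 := by rw [hb, ← hw]; ring
  -- σ₀ < b
  have hw2σ : 2*σ₀ < w := by nlinarith [hw2, hplt, hwnn, hσpos]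
  have hσb : σ₀ < b := by rw [hbw]; linarith
  have hbpos : 0 < b := lt_trans hσpos hσb
  -- Eq1
  have hEq1 : 3*(b^2 + σ₀^2) + 2*b*σ₀ = 8*(1+α) := by
    linear_combination ((3*b + σ₀ + 2*w)/3) * (by rw [hbw]; ring : 3*b + σ₀ = 2*w)
      + (4/3) * hw2
  -- the key identity 2σ₀w = σ₀² + 3β - 3 - 3α
  have hqle : q ≤ 4*β - 2 - 2*α := by nlinarith [hq2, hβ2, hβge1, hβnn, hqnn, hα]
  have hkeynn : 0 ≤ σ₀^2 + 3*β - 3 - 3*α := by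
    rw [hσ2]; linarith
  have hsq : (2*σ₀*w)^2 = (σ₀^2 + 3*β - 3 - 3*α)^2 := by
    linear_combination (4*σ₀^2) * hw2 + (15 - 9*σ₀^2 + 6*q - 3*β + 15*α) * hσ2
      + (-4) * hq2 + (-8) * hβ2
  have hkey : 2*σ₀*w = σ₀^2 + 3*β - 3 - 3*α := by
    calc 2*σ₀*w = Real.sqrt ((2*σ₀*w)^2) := (Real.sqrt_sq (by positivity)).symm
    _ = Real.sqrt ((σ₀^2 + 3*β - 3 - 3*α)^2) := by rw [hsq]
    _ = σ₀^2 + 3*β - 3 - 3*α := Real.sqrt_sq hkeynn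
  -- cubic: σ₀ b (σ₀ + b)² = 4α²
  have hcubic : σ₀*b*(σ₀+b)^2 = 4*α^2 := by
    linear_combination (σ₀*b^2 + (2/3)*σ₀*w*b + (4/9)*σ₀*w^2 + (5/3)*σ₀^2*b
        + (8/9)*σ₀^2*w + (4/9)*σ₀^3) * hbw
      + (-(4/9) + (4/27)*w^2 + (8/27)*σ₀*w + (4/27)*σ₀^2 + (4/9)*β - (4/9)*α) * hkey
      + (4/3) * hβ2 + (-(4/9) + (4/9)*β - (4/9)*α) * hw2
  -- v = √(σ₀ b), and (σ₀+b) v = 2α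
  obtain ⟨v, hv⟩ : ∃ v : ℝ, v = Real.sqrt (σ₀*b) := ⟨_, rfl⟩
  have hv0 : 0 < v := hv ▸ Real.sqrt_pos.2 (by positivity)
  have hv2 : v^2 = σ₀*b := by rw [hv]; exact Real.sq_sqrt (by positivity)
  have htv : (σ₀+b)*v = 2*α := by
    have h4 : ((σ₀+b)*v)^2 = (2*α)^2 := by
      rw [mul_pow, hv2]; linear_combination hcubic
    calc (σ₀+b)*v = Real.sqrt (((σ₀+b)*v)^2) := (Real.sqrt_sq (by positivity)).symm
    _ = Real.sqrt ((2*α)^2) := by rw [h4]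
    _ = 2*α := Real.sqrt_sq (by positivity)
  constructor
  · intro x hx
    have hx0 : 0 < x := lt_of_lt_of_le hσpos hx.1
    rw [hf x]
    apply mul_nonneg (mul_nonneg (by positivity) (Real.sqrt_nonneg _))
    have : 0 ≤ (α / Real.sqrt (σ₀ * b)) * (1/x) := by positivity
    linarith
  · have hint := integral_semicircle_helper σ₀ b (α / Real.sqrt (σ₀*b)) hσpos hσb
    have hfg : ∀ x, f x = (1/π) * (Real.sqrt ((b - x)*(x - σ₀))
        * (1 + (α / Real.sqrt (σ₀*b)) * (1/x))) := by
      intro x; rw [hf x]; ring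
    rw [intervalIntegral.integral_congr (g := fun x => (1/π) * (Real.sqrt ((b - x)*(x - σ₀))
        * (1 + (α / Real.sqrt (σ₀*b)) * (1/x)))) (fun x _ => hfg x)]
    rw [intervalIntegral.integral_const_mul, hint, ← hv]
    rw [show α / v * (π * ((σ₀ + b)/2 - v)) = π * (α/v * ((σ₀+b)/2 - v)) by ring]
    field_simp
    ring_nf
    linear_combination (2*v) * hEq1 + (-4*(σ₀+b)) * htv
end

section
/- Let σ ∈ ℝ with σ ≥ -√2, and set b = (2/3)(√(σ² + 6) + σ/2). Then b > σ, and the function f(x) = (1/(2π))√((b-x)/(x-σ))·(2x + b - σ) is a probability density on [σ, b]: it is nonnegative on (σ, b) and ∫_σ^b f(x) dx = 1. -/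
open MeasureTheory Real

/-- For `σ ≥ -√2` and `b = (2/3)(√(σ²+6) + σ/2)`, one has `b > σ`
and `f(x) = (1/(2π))√((b-x)/(x-σ))(2x + b - σ)` is a probability density on
`[σ, b]`. -/
theorem halfRange_hermite_limit_density
    (σ b : ℝ) (hσ : -Real.sqrt 2 ≤ σ)
    (hb : b = (2/3) * (Real.sqrt (σ^2 + 6) + σ/2))
    (f : ℝ → ℝ)
    (hf : ∀ x, f x = (1/(2*π)) * Real.sqrt ((b - x)/(x - σ)) * (2*x + b - σ)) :
    σ < b ∧ (∀ x ∈ Set.Ioo σ b, 0 ≤ f x) ∧ (∫ x in σ..b, f x) = 1 := by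
  have hs0 : 0 ≤ Real.sqrt (σ^2+6) := Real.sqrt_nonneg _
  have hs2 : Real.sqrt (σ^2+6) ^ 2 = σ^2+6 := Real.sq_sqrt (by positivity)
  have h20 : 0 ≤ Real.sqrt 2 := Real.sqrt_nonneg _
  have h2 : Real.sqrt 2 ^ 2 = 2 := Real.sq_sqrt (by norm_num)
  have hσb : σ < b := by nlinarith [hs2, hs0, sq_nonneg (Real.sqrt (σ^2+6) - σ), sq_nonneg (Real.sqrt (σ^2+6) + σ)]
  have key : (b - σ) * (3*b + σ) = 8 := by
    subst hb; linear_combination (4/3) * hs2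
  have hbσ : 0 ≤ σ + b := by
    rcases le_or_gt 0 σ with h | h
    · linarith
    · have hσ2 : σ^2 ≤ 2 := by nlinarith
      have : -2*σ ≤ Real.sqrt (σ^2+6) := by nlinarith
      rw [hb]; linarith

  refine ⟨hσb, ?_, ?_⟩
  · intro x hx
    rw [hf]
    have : 0 ≤ 2*x + b - σ := by have := hx.1; linarith
    have hπ : 0 < π := Real.pi_pos
    positivity
  -- the integral
  set m : ℝ := (σ + b)/2 with hm
  set r : ℝ := (b - σ)/2 with hrdef
  have hr : 0 < r := by simp only [hrdef]; linarith
  set F : ℝ → ℝ := fun x => (1/(2*π)) * ((x + m) * Real.sqrt ((b - x)*(x - σ))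
      + 2 * Real.arcsin ((x - m)/r)) with hF
  have hπ : 0 < π := Real.pi_pos
  have hcont : ContinuousOn F (Set.Icc σ b) := by
    apply Continuous.continuousOn
    apply Continuous.mul continuous_const
    apply Continuous.add
    · exact (continuous_id.add continuous_const).mul
        (((continuous_const.sub continuous_id).mul (continuous_id.sub continuous_const)).sqrt)
    · exact continuous_const.mul
        (Real.continuous_arcsin.comp ((continuous_id.sub continuous_const).div_const r))
  have hderiv : ∀ x ∈ Set.Ioo σ b, HasDerivAt F (f x) x := by
    intro x hx
    obtain ⟨hx1, hx2⟩ := hx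
    have hxσ : 0 < x - σ := by linarith
    have hbx : 0 < b - x := by linarith
    have hgpos : 0 < Real.sqrt ((b - x)*(x - σ)) := Real.sqrt_pos.2 (by positivity)
    set g : ℝ := Real.sqrt ((b - x)*(x - σ)) with hg
    have hg2 : g^2 = (b - x)*(x - σ) := Real.sq_sqrt (by positivity)
    have hu : HasDerivAt (fun y => (b - y)*(y - σ)) (b + σ - 2*x) x := by
      have : HasDerivAt (fun y => (b - y)*(y - σ)) ((0 - 1) * (x - σ) + (b - x) * 1) x := ((hasDerivAt_const x b).sub (hasDerivAt_id x)).mul ((hasDerivAt_id x).sub_const σ)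
      convert this using 1
      ring
    have hsq : HasDerivAt (fun y => Real.sqrt ((b - y)*(y - σ))) ((b + σ - 2*x)/(2*g)) x :=
      hu.sqrt (by positivity)
    have h1 : HasDerivAt (fun y => (y + m) * Real.sqrt ((b - y)*(y - σ)))
        (1 * g + (x + m) * ((b + σ - 2*x)/(2*g))) x :=
      ((hasDerivAt_id x).add_const m).mul hsq
    set w : ℝ := (x - m)/r with hw
    have hw1 : -1 < w := by
      rw [hw, lt_div_iff₀ hr]
      simp only [hm, hrdef]; linarith
    have hw2 : w < 1 := by
      rw [hw, div_lt_iff₀ hr]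
      simp only [hm, hrdef]; linarith
    have hlin : HasDerivAt (fun y => (y - m)/r) (1/r) x := by
      simpa using ((hasDerivAt_id x).sub_const m).div_const r
    have harc : HasDerivAt (fun y => Real.arcsin ((y - m)/r))
        (1/Real.sqrt (1 - w^2) * (1/r)) x :=
      (Real.hasDerivAt_arcsin (by linarith) (by linarith)).comp x hlin
    have hFd : HasDerivAt F ((1/(2*π)) * ((1 * g + (x + m) * ((b + σ - 2*x)/(2*g)))
        + 2 * (1/Real.sqrt (1 - w^2) * (1/r)))) x :=
      (h1.add (harc.const_mul 2)).const_mul _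
    have hs1 : Real.sqrt (1 - w^2) = g / r := by
      rw [show 1 - w^2 = ((b - x)*(x - σ))/r^2 by
        rw [hw]; field_simp; simp only [hm, hrdef]; ring]
      rw [Real.sqrt_div (by positivity), Real.sqrt_sq hr.le]
    have hfx : f x = (1/(2*π)) * ((1 * g + (x + m) * ((b + σ - 2*x)/(2*g)))
        + 2 * (1/Real.sqrt (1 - w^2) * (1/r))) := by
      rw [hf, hs1]
      rw [show (b - x)/(x - σ) = ((b - x)*(x - σ))/(x - σ)^2 by field_simp]
      rw [Real.sqrt_div (by positivity), Real.sqrt_sq hxσ.le, ← hg]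
      rw [hm, hrdef]
      have hbσne : b - σ ≠ 0 := sub_ne_zero.2 hσb.ne'
      field_simp [hgpos.ne', hxσ.ne', hπ.ne', hbσne]
      linear_combination (4*(x + b)) * hg2 + (x - σ) * key
    rw [hfx]
    exact hFd
  have hC : IntervalIntegrable
      (fun x => (1/(2*π) * Real.sqrt (b - σ) * (3*b - σ)) * (x - σ) ^ (-(1/2) : ℝ))
      volume σ b := by
    have h0 : IntervalIntegrable (fun x : ℝ => x ^ (-(1/2) : ℝ)) volume 0 (b - σ) :=
      intervalIntegral.intervalIntegrable_rpow' (by norm_num)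
    have h1 := h0.comp_sub_right σ
    simp only [zero_add, sub_add_cancel] at h1
    exact h1.const_mul _
  have hmeas : AEStronglyMeasurable f (volume.restrict (Set.uIoc σ b)) := by
    have : f = fun x => (1/(2*π)) * Real.sqrt ((b - x)/(x - σ)) * (2*x + b - σ) :=
      funext hf
    rw [this]
    apply Measurable.aestronglyMeasurable
    fun_prop
  have hint : IntervalIntegrable f volume σ b := by
    apply hC.mono_fun hmeas
    rw [Filter.EventuallyLE, ae_restrict_iff' measurableSet_uIoc]
    filter_upwards with x hxI
    rw [Set.uIoc_of_le hσb.le] at hxI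
    obtain ⟨hx1, hx2⟩ := hxI
    have hxσ : 0 < x - σ := by linarith
    have hf0 : 0 ≤ f x := by
      rw [hf]
      have : 0 ≤ 2*x + b - σ := by linarith
      positivity
    have hrw : (x - σ) ^ (-(1/2) : ℝ) = (Real.sqrt (x - σ))⁻¹ := by
      rw [Real.rpow_neg hxσ.le, Real.sqrt_eq_rpow]
    have hsx : 0 < Real.sqrt (x - σ) := Real.sqrt_pos.2 hxσ
    have h3 : Real.sqrt (b - x) * (2*x + b - σ) ≤ Real.sqrt (b - σ) * (3*b - σ) :=
      mul_le_mul (Real.sqrt_le_sqrt (by linarith)) (by linarith) (by linarith)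
        (Real.sqrt_nonneg _)
    have hfle : f x ≤ (1/(2*π) * Real.sqrt (b - σ) * (3*b - σ)) * (Real.sqrt (x - σ))⁻¹ := by
      rw [hf, Real.sqrt_div (by linarith : (0:ℝ) ≤ b - x)]
      calc (1/(2*π)) * (Real.sqrt (b - x)/Real.sqrt (x - σ)) * (2*x + b - σ)
          = (1/(2*π)) * (Real.sqrt (x - σ))⁻¹ * (Real.sqrt (b - x) * (2*x + b - σ)) := by
            rw [div_eq_mul_inv]; ring
        _ ≤ (1/(2*π)) * (Real.sqrt (x - σ))⁻¹ * (Real.sqrt (b - σ) * (3*b - σ)) := by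
            apply mul_le_mul_of_nonneg_left h3 (by positivity)
        _ = (1/(2*π) * Real.sqrt (b - σ) * (3*b - σ)) * (Real.sqrt (x - σ))⁻¹ := by ring
    have hCnn : 0 ≤ 1/(2*π) * Real.sqrt (b - σ) * (3*b - σ) := by
      have : 0 ≤ Real.sqrt (b - σ) := Real.sqrt_nonneg _
      have h3bσ : 0 ≤ 3*b - σ := by linarith
      positivity
    simp only [Real.norm_eq_abs, abs_of_nonneg hf0,
      abs_of_nonneg (by rw [hrw]; positivity : 0 ≤ (1/(2*π) * Real.sqrt (b - σ) * (3*b - σ)) * (x - σ) ^ (-(1/2) : ℝ))]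
    rw [hrw]
    exact hfle
  have hFTC := intervalIntegral.integral_eq_sub_of_hasDerivAt_of_le hσb.le hcont hderiv hint
  rw [hFTC, hF]
  have hFb : (b - m)/r = 1 := by
    rw [div_eq_one_iff_eq hr.ne', hm, hrdef]; ring
  have hFσ : (σ - m)/r = -1 := by
    rw [div_eq_iff hr.ne', hm, hrdef]; ring
  simp only [hFb, hFσ, Real.arcsin_one, Real.arcsin_neg_one, sub_self, zero_mul,
    Real.sqrt_zero, mul_zero, sub_self]
  have hπ' : π ≠ 0 := hπ.ne'
  field_simp
  ring
end

section
/- For σ = a = 0 one has b = (2/3)√6 and the density f(x) = (1/(2π))√((b-x)/x)·(2x + b) is a probability density on [0, b], i.e. f ≥ 0 on (0,b) and ∫_0^b f(x) dx = 1. -/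
open MeasureTheory Real

/-- For `σ = a = 0` one has `b = (2/3)√6` and
`f(x) = (1/(2π))√((b-x)/x)(2x + b)` is a probability density on `[0, b]`. -/
theorem halfRange_hermite_limit_density_zero
    (b : ℝ) (hb : b = (2/3) * Real.sqrt 6)
    (f : ℝ → ℝ)
    (hf : ∀ x, f x = (1/(2*π)) * Real.sqrt ((b - x)/x) * (2*x + b)) :
    (∀ x ∈ Set.Ioo (0:ℝ) b, 0 ≤ f x) ∧ (∫ x in (0:ℝ)..b, f x) = 1 := by
  have hb0 : 0 < b := by
    rw [hb]; positivity
  have hb2 : b ^ 2 = 8/3 := by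
    rw [hb, mul_pow, sq_sqrt (by norm_num : (0:ℝ) ≤ 6)]; norm_num
  have hπ : 0 < π := Real.pi_pos
  constructor
  · intro x hx
    rw [hf]
    have h1 : 0 ≤ (b - x)/x := div_nonneg (by linarith [hx.2]) hx.1.le
    have h2 : 0 ≤ 2*x + b := by linarith [hx.1]
    positivity
  · set F : ℝ → ℝ := fun x =>
      (1/(2*π)) * ((x + b/2) * Real.sqrt (x*(b-x)) + (3*b^2/4) * Real.arcsin ((2*x-b)/b))
      with hF
    have hfx : f = fun x => (1/(2*π)) * Real.sqrt ((b - x)/x) * (2*x + b) := funext hf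
    -- derivative on the open interval
    have hderiv : ∀ x ∈ Set.Ioo (0:ℝ) b, HasDerivAt F (f x) x := by
      intro x hx
      obtain ⟨hx0, hxb⟩ := hx
      have hs0 : 0 < x*(b-x) := mul_pos hx0 (by linarith)
      set s : ℝ := Real.sqrt (x*(b-x)) with hsdef
      have hs : 0 < s := Real.sqrt_pos.mpr hs0
      have hsq : s ^ 2 = x*(b-x) := Real.sq_sqrt hs0.le
      have hy1 : (2*x-b)/b ≠ -1 := by
        intro h; rw [div_eq_iff hb0.ne'] at h; nlinarith
      have hy2 : (2*x-b)/b ≠ 1 := by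
        intro h; rw [div_eq_iff hb0.ne'] at h; nlinarith
      have h1 : HasDerivAt (fun x : ℝ => x*(b-x)) (b - 2*x) x := by
        have := (hasDerivAt_id x).mul ((hasDerivAt_const x b).sub (hasDerivAt_id x))
        refine this.congr_deriv ?_
        simp [id_eq]; ring
      have h2 : HasDerivAt (fun x : ℝ => Real.sqrt (x*(b-x)))
          ((b - 2*x) / (2 * s)) x := h1.sqrt hs0.ne'
      have h3 : HasDerivAt (fun x : ℝ => (2*x-b)/b) (2/b) x := by
        have := (((hasDerivAt_id x).const_mul 2).sub_const b).div_const b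
        refine this.congr_deriv ?_
        ring
      have h4 : HasDerivAt (fun x : ℝ => Real.arcsin ((2*x-b)/b))
          (1 / Real.sqrt (1 - ((2*x-b)/b)^2) * (2/b)) x :=
        by have := (Real.hasDerivAt_arcsin hy1 hy2).comp x h3; exact this
      have h5 : HasDerivAt (fun x : ℝ => x + b/2) 1 x := by
        simpa using (hasDerivAt_id x).add_const (b/2)
      have h6 : HasDerivAt F ((1/(2*π)) *
          ((1 * s + (x + b/2) * ((b - 2*x) / (2 * s)))
            + (3*b^2/4) * (1 / Real.sqrt (1 - ((2*x-b)/b)^2) * (2/b)))) x :=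
        ((h5.mul h2).add (h4.const_mul (3*b^2/4))).const_mul (1/(2*π))
      have e2 : Real.sqrt (1 - ((2*x-b)/b)^2) = 2 * s / b := by
        have h7 : (2 * s / b)^2 = 4*(x*(b-x))/b^2 := by
          rw [div_pow, mul_pow, hsq]; ring
        rw [show 1 - ((2*x-b)/b)^2 = (2 * s / b)^2 by rw [h7]; field_simp; ring]
        exact Real.sqrt_sq (by positivity)
      have e3 : Real.sqrt ((b-x)/x) = s / x := by
        rw [hsdef, show (b-x)/x = x*(b-x)/x^2 by field_simp,
          Real.sqrt_div hs0.le, Real.sqrt_sq hx0.le]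
      have key : (1/(2*π)) *
          ((1 * s + (x + b/2) * ((b - 2*x) / (2 * s)))
            + (3*b^2/4) * (1 / Real.sqrt (1 - ((2*x-b)/b)^2) * (2/b))) = f x := by
        rw [hf, e2, e3]
        field_simp
        linear_combination (-16*(x+b)) * hsq
      exact key ▸ h6
    -- continuity of F on [0, b]
    have hcont : Continuous F := by
      apply continuous_const.mul
      apply Continuous.add
      · exact (continuous_id.add continuous_const).mul
          ((continuous_id.mul (continuous_const.sub continuous_id)).sqrt)
      · exact continuous_const.mul (Real.continuous_arcsin.comp
          (((continuous_const.mul continuous_id).sub continuous_const).div_const b))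
    -- interval integrability of f
    have hint : IntervalIntegrable f volume 0 b := by
      have hmaj : IntervalIntegrable
          (fun x : ℝ => (3*b*Real.sqrt b/(2*π)) * x ^ (-(1/2) : ℝ)) volume 0 b :=
        (intervalIntegral.intervalIntegrable_rpow' (by norm_num)).const_mul _
      refine hmaj.mono_fun ?_ ?_
      · refine Measurable.aestronglyMeasurable ?_
        rw [hfx]
        exact (measurable_const.mul
          (((measurable_const.sub measurable_id).div measurable_id).sqrt)).mul
          ((measurable_const.mul measurable_id).add measurable_const)
      · rw [Filter.EventuallyLE, ae_restrict_iff' measurableSet_uIoc]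
        refine Filter.Eventually.of_forall ?_
        intro x hx
        rw [Set.uIoc_of_le hb0.le] at hx
        obtain ⟨hx0, hxb⟩ := hx
        rw [hf]
        have hfnn : 0 ≤ (1/(2*π)) * Real.sqrt ((b - x)/x) * (2*x + b) := by
          have h1 : 0 ≤ (b - x)/x := div_nonneg (by linarith) hx0.le
          have h2 : 0 ≤ 2*x + b := by linarith
          positivity
        have hnn2 : (0:ℝ) ≤ 3*b*Real.sqrt b/(2*π) * x ^ (-(1/2):ℝ) :=
          mul_nonneg (div_nonneg (mul_nonneg (by linarith : (0:ℝ) ≤ 3*b)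
            (Real.sqrt_nonneg b)) (by positivity)) (Real.rpow_nonneg hx0.le _)
        rw [Real.norm_of_nonneg hfnn, Real.norm_of_nonneg hnn2]
        have hxr : x ^ (-(1/2) : ℝ) = (Real.sqrt x)⁻¹ := by
          rw [Real.rpow_neg hx0.le, Real.sqrt_eq_rpow]
        rw [hxr]
        have h1 : Real.sqrt ((b-x)/x) ≤ Real.sqrt b * (Real.sqrt x)⁻¹ := by
          rw [show (Real.sqrt x)⁻¹ = Real.sqrt x⁻¹ by rw [Real.sqrt_inv],
            ← Real.sqrt_mul hb0.le, show (b-x)/x = (b-x) * x⁻¹ by ring]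
          apply Real.sqrt_le_sqrt
          have hxi : (0:ℝ) ≤ x⁻¹ := by positivity
          exact mul_le_mul_of_nonneg_right (by linarith) hxi
        have h2 : 2*x + b ≤ 3*b := by linarith
        calc (1/(2*π)) * Real.sqrt ((b - x)/x) * (2*x + b)
            ≤ (1/(2*π)) * (Real.sqrt b * (Real.sqrt x)⁻¹) * (3*b) := by
              apply mul_le_mul ?_ h2 (by linarith) (by positivity)
              apply mul_le_mul_of_nonneg_left h1 (by positivity)
          _ = 3*b*Real.sqrt b/(2*π) * (Real.sqrt x)⁻¹ := by ring
    -- FTC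
    have hFTC : (∫ x in (0:ℝ)..b, f x) = F b - F 0 :=
      intervalIntegral.integral_eq_sub_of_hasDeriv_right_of_le hb0.le hcont.continuousOn
        (fun x hx => (hderiv x hx).hasDerivWithinAt) hint
    rw [hFTC, hF]
    simp only
    rw [show b*(b-b) = 0 by ring, show (0:ℝ)*(b-0) = 0 by ring, Real.sqrt_zero,
      show (2*b-b)/b = 1 by field_simp; ring, show (2*0-b)/b = -1 by field_simp; ring,
      Real.arcsin_one, Real.arcsin_neg_one, hb2]
    field_simp
    ring
end

section
/- For α > 0 and σ > 0, suppose b > σ satisfies σb - α ≥ 0 and b²/2 + ασ/b - σ²/2 - α - 1 = 0. Then f(x) = (1/(π|x|))√((b²-x²)/(x²-σ²))·(x² - ασ/b) is a probability density on [-b,-σ] ∪ [σ,b]: it is nonnegative there and integrates to 1. -/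
open MeasureTheory Real

noncomputable def Faux (α σ b : ℝ) (x : ℝ) : ℝ :=
  (1/(2*π)) * Real.sqrt ((b^2-x^2)*(x^2-σ^2))
  - ((b^2-σ^2)/(2*π) + (α*σ/b)/π) * Real.arcsin (Real.sqrt ((b^2-x^2)/(b^2-σ^2)))
  + (α/π) * Real.arcsin ((σ/x) * Real.sqrt ((b^2-x^2)/(b^2-σ^2)))

lemma Faux_hasDerivAt (α σ b x : ℝ) (hσ : 0 < σ) (hb : σ < b) (hx : x ∈ Set.Ioo σ b) :
    HasDerivAt (Faux α σ b)
      ((1/(π*x)) * Real.sqrt ((b^2 - x^2)/(x^2 - σ^2)) * (x^2 - α*σ/b)) x := by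
  obtain ⟨hxσ, hxb⟩ := hx
  have hx0 : 0 < x := hσ.trans hxσ
  have hb0 : 0 < b := hσ.trans hb
  have hP : 0 < b^2 - x^2 := by nlinarith
  have hQ : 0 < x^2 - σ^2 := by nlinarith
  have hD : 0 < b^2 - σ^2 := by nlinarith
  have hsp : Real.sqrt (b^2-x^2) ^ 2 = b^2 - x^2 := Real.sq_sqrt hP.le
  have hsq : Real.sqrt (x^2-σ^2) ^ 2 = x^2 - σ^2 := Real.sq_sqrt hQ.le
  have hsd : Real.sqrt (b^2-σ^2) ^ 2 = b^2 - σ^2 := Real.sq_sqrt hD.le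
  have hsp0 : 0 < Real.sqrt (b^2-x^2) := Real.sqrt_pos.mpr hP
  have hsq0 : 0 < Real.sqrt (x^2-σ^2) := Real.sqrt_pos.mpr hQ
  have hsd0 : 0 < Real.sqrt (b^2-σ^2) := Real.sqrt_pos.mpr hD
  -- polynomial derivatives
  have poly1 : HasDerivAt (fun y : ℝ => b^2 - y^2) (-(2*x)) x := by
    simpa using (hasDerivAt_pow 2 x).const_sub (b^2)
  have poly2 : HasDerivAt (fun y : ℝ => y^2 - σ^2) (2*x) x := by
    simpa using (hasDerivAt_pow 2 x).sub_const (σ^2)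
  -- term 1
  have hA : HasDerivAt (fun y : ℝ => Real.sqrt ((b^2-y^2)*(y^2-σ^2)))
      (x*((b^2-x^2)-(x^2-σ^2))/(Real.sqrt (b^2-x^2) * Real.sqrt (x^2-σ^2))) x := by
    have : HasDerivAt (fun y : ℝ => Real.sqrt ((b^2-y^2)*(y^2-σ^2)))
        ((-(2*x)*(x^2-σ^2) + (b^2-x^2)*(2*x)) / (2*Real.sqrt ((b^2-x^2)*(x^2-σ^2)))) x :=
      (poly1.mul poly2).sqrt (by show (b^2-x^2)*(x^2-σ^2) ≠ 0; positivity)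
    convert this using 1
    rw [Real.sqrt_mul hP.le]
    field_simp
    ring
  -- u and its derivative
  have hu : HasDerivAt (fun y : ℝ => Real.sqrt ((b^2-y^2)/(b^2-σ^2)))
      ((-(2*x)/(b^2-σ^2)) / (2 * Real.sqrt ((b^2-x^2)/(b^2-σ^2)))) x :=
    (poly1.div_const _).sqrt (by positivity)
  have huval : Real.sqrt ((b^2-x^2)/(b^2-σ^2)) = Real.sqrt (b^2-x^2) / Real.sqrt (b^2-σ^2) :=
    Real.sqrt_div hP.le _
  have hu_lt : Real.sqrt ((b^2-x^2)/(b^2-σ^2)) < 1 := by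
    rw [show (1:ℝ) = Real.sqrt 1 by simp]
    exact Real.sqrt_lt_sqrt (by positivity) ((div_lt_one hD).mpr (by nlinarith))
  have hu_nonneg : (0:ℝ) ≤ Real.sqrt ((b^2-x^2)/(b^2-σ^2)) := Real.sqrt_nonneg _
  -- term 2
  have hB : HasDerivAt (fun y : ℝ => Real.arcsin (Real.sqrt ((b^2-y^2)/(b^2-σ^2))))
      (-(x/(Real.sqrt (b^2-x^2) * Real.sqrt (x^2-σ^2)))) x := by
    have harc : HasDerivAt (fun y : ℝ => Real.arcsin (Real.sqrt ((b^2-y^2)/(b^2-σ^2))))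
        (1 / Real.sqrt (1 - Real.sqrt ((b^2-x^2)/(b^2-σ^2))^2) * (-(2*x)/(b^2-σ^2) / (2*Real.sqrt ((b^2-x^2)/(b^2-σ^2))))) x :=
      by have h := (Real.hasDerivAt_arcsin (by linarith) (ne_of_lt hu_lt)).comp x hu; exact h
    convert harc using 1
    rw [Real.sq_sqrt (by positivity : (0:ℝ) ≤ (b^2-x^2)/(b^2-σ^2))]
    rw [show 1 - (b^2-x^2)/(b^2-σ^2) = (x^2-σ^2)/(b^2-σ^2) by field_simp; ring]
    rw [Real.sqrt_div hQ.le, huval]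
    field_simp
    linear_combination hsd
  -- term 3
  have hv_inner : HasDerivAt (fun y : ℝ => σ/y) (-(σ/x^2)) x := by
    have : HasDerivAt (fun y : ℝ => σ/y) _ x := (hasDerivAt_const x σ).div (hasDerivAt_id x) hx0.ne'
    simpa [neg_div] using this
  have hv := hv_inner.mul hu
  have hv_nonneg : (0:ℝ) ≤ (σ/x) * Real.sqrt ((b^2-x^2)/(b^2-σ^2)) := by positivity
  have hv2 : ((σ/x) * Real.sqrt ((b^2-x^2)/(b^2-σ^2)))^2
      = (σ^2*(b^2-x^2))/(x^2*(b^2-σ^2)) := by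
    rw [mul_pow, div_pow, Real.sq_sqrt (by positivity : (0:ℝ) ≤ (b^2-x^2)/(b^2-σ^2))]
    field_simp
  have hv_lt : (σ/x) * Real.sqrt ((b^2-x^2)/(b^2-σ^2)) < 1 := by
    have h1 : (σ^2*(b^2-x^2))/(x^2*(b^2-σ^2)) < 1 := by
      rw [div_lt_one (by positivity)]
      nlinarith
    nlinarith [hv2, h1, hv_nonneg]
  have key : 1 - ((σ/x) * Real.sqrt ((b^2-x^2)/(b^2-σ^2)))^2
      = (b*Real.sqrt (x^2-σ^2)/(x*Real.sqrt (b^2-σ^2)))^2 := by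
    rw [hv2, div_pow, mul_pow, mul_pow, hsq, hsd]
    field_simp
    ring
  have hC : HasDerivAt (fun y : ℝ => Real.arcsin ((σ/y) * Real.sqrt ((b^2-y^2)/(b^2-σ^2))))
      (-(σ*b/(x*(Real.sqrt (b^2-x^2) * Real.sqrt (x^2-σ^2))))) x := by
    have harc : HasDerivAt (fun y : ℝ => Real.arcsin ((σ/y) * Real.sqrt ((b^2-y^2)/(b^2-σ^2))))
        (1 / Real.sqrt (1 - (σ/x * Real.sqrt ((b^2-x^2)/(b^2-σ^2)))^2) * (-(σ/x^2) * Real.sqrt ((b^2-x^2)/(b^2-σ^2)) + σ/x * (-(2*x)/(b^2-σ^2) / (2*Real.sqrt ((b^2-x^2)/(b^2-σ^2)))))) x :=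
      by have h := (Real.hasDerivAt_arcsin (by linarith) (ne_of_lt hv_lt)).comp x hv; exact h
    convert harc using 1
    rw [key, Real.sqrt_sq (by positivity), huval]
    field_simp
    linear_combination (b^2-σ^2) * hsp + x^2 * hsd
  -- combine
  have hF : HasDerivAt (Faux α σ b) _ x := ((hA.const_mul (1/(2*π))).sub (hB.const_mul ((b^2-σ^2)/(2*π) + (α*σ/b)/π))).add (hC.const_mul (α/π))
  convert hF using 1
  rw [Real.sqrt_div hP.le]
  field_simp
  linear_combination (2*b*x^2 - 2*σ*α) * hsp

lemma Faux_contOn (α σ b : ℝ) (hσ : 0 < σ) : ContinuousOn (Faux α σ b) (Set.Icc σ b) := by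
  have h1 : Continuous fun x : ℝ => (1/(2*π)) * Real.sqrt ((b^2-x^2)*(x^2-σ^2)) := by fun_prop
  have h2 : Continuous fun x : ℝ =>
      ((b^2-σ^2)/(2*π) + (α*σ/b)/π) * Real.arcsin (Real.sqrt ((b^2-x^2)/(b^2-σ^2))) :=
    continuous_const.mul (Real.continuous_arcsin.comp (by fun_prop))
  have h3 : ContinuousOn
      (fun x : ℝ => (α/π) * Real.arcsin ((σ/x) * Real.sqrt ((b^2-x^2)/(b^2-σ^2))))
      (Set.Icc σ b) := by
    apply ContinuousOn.mul continuousOn_const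
    apply Real.continuous_arcsin.comp_continuousOn
    apply ContinuousOn.mul
    · exact continuousOn_const.div continuousOn_id (fun x hx => (hσ.trans_le hx.1).ne')
    · fun_prop
  exact (h1.continuousOn.sub h2.continuousOn).add h3

lemma Faux_at_b (α σ b : ℝ) : Faux α σ b b = 0 := by
  simp [Faux]

lemma Faux_at_σ (α σ b : ℝ) (hσ : 0 < σ) (hb : σ < b) :
    Faux α σ b σ = -((b^2-σ^2)/(2*π) + (α*σ/b)/π) * (π/2) + (α/π) * (π/2) := by
  have hD : b^2 - σ^2 ≠ 0 := by nlinarith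
  rw [Faux, div_self hD, Real.sqrt_one, div_self hσ.ne', one_mul, Real.arcsin_one]
  simp
  ring


/-- For `α > 0`, `σ > 0`, if `b > σ` satisfies `σb - α ≥ 0` and
`b²/2 + ασ/b - σ²/2 - α - 1 = 0`, then
`f(x) = (1/(π|x|))√((b²-x²)/(x²-σ²))(x² - ασ/b)` is a probability density on
`[-b,-σ] ∪ [σ,b]`. -/
theorem truncated_symmetric_genHermite_limit_density
    (α σ b : ℝ) (hα : 0 < α) (hσ : 0 < σ) (hbσ : σ < b)
    (h1 : 0 ≤ σ*b - α)
    (h2 : b^2/2 + α*σ/b - σ^2/2 - α - 1 = 0)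
    (f : ℝ → ℝ)
    (hf : ∀ x, f x = (1/(π*|x|)) * Real.sqrt ((b^2 - x^2)/(x^2 - σ^2))
      * (x^2 - α*σ/b)) :
    (∀ x ∈ Set.Icc (-b) (-σ) ∪ Set.Icc σ b, 0 ≤ f x) ∧
    (∫ x in Set.Icc (-b) (-σ) ∪ Set.Icc σ b, f x) = 1 := by

  have hb0 : 0 < b := hσ.trans hbσ
  have hnonneg : ∀ x ∈ Set.Icc (-b) (-σ) ∪ Set.Icc σ b, 0 ≤ f x := by
    intro x hx
    have hx2 : σ^2 ≤ x^2 := by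
      rcases hx with h | h
      · nlinarith [h.1, h.2]
      · nlinarith [h.1, h.2]
    rw [hf]
    have h3 : 0 ≤ x^2 - α*σ/b := by
      have : α*σ/b ≤ σ^2 := by rw [div_le_iff₀ hb0]; nlinarith
      linarith
    have h4 : 0 ≤ 1/(π*|x|) := by positivity
    exact mul_nonneg (mul_nonneg h4 (Real.sqrt_nonneg _)) h3
  refine ⟨hnonneg, ?_⟩
  have hfeven : ∀ x : ℝ, f (-x) = f x := by
    intro x; rw [hf, hf]; simp [abs_neg, neg_sq]
  have hderiv : ∀ x ∈ Set.Ioo σ b, HasDerivAt (Faux α σ b) (f x) x := by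
    intro x hx
    rw [hf, abs_of_pos (hσ.trans hx.1)]
    exact Faux_hasDerivAt α σ b x hσ hbσ hx
  have hcont := Faux_contOn α σ b hσ
  have hpos : ∀ x ∈ Set.Ioo σ b, 0 ≤ f x := fun x hx =>
    hnonneg x (Or.inr ⟨hx.1.le, hx.2.le⟩)
  have hint : IntegrableOn f (Set.Ioc σ b) :=
    intervalIntegral.integrableOn_deriv_of_nonneg hcont hderiv hpos
  have hii : IntervalIntegrable f volume σ b :=
    (intervalIntegrable_iff_integrableOn_Ioc_of_le hbσ.le).mpr hint
  have hIccInt : IntegrableOn f (Set.Icc σ b) := by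
    rw [integrableOn_Icc_iff_integrableOn_Ioc]; exact hint
  have hIccVal : ∫ x in Set.Icc σ b, f x = Faux α σ b b - Faux α σ b σ := by
    rw [MeasureTheory.integral_Icc_eq_integral_Ioc,
      ← intervalIntegral.integral_of_le hbσ.le]
    exact intervalIntegral.integral_eq_sub_of_hasDeriv_right_of_le hbσ.le hcont
      (fun x hx => (hderiv x hx).hasDerivWithinAt) hii
  -- negative side
  have hderivG : ∀ x ∈ Set.Ioo (-b) (-σ),
      HasDerivAt (fun y => -(Faux α σ b (-y))) (f x) x := by
    intro x hx
    have hx' : -x ∈ Set.Ioo σ b := ⟨by linarith [hx.2], by linarith [hx.1]⟩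
    have h1' : HasDerivAt (fun y : ℝ => Faux α σ b (-y)) (f (-x) * (-1)) x :=
      (hderiv (-x) hx').comp x (hasDerivAt_neg x)
    have h2' := h1'.neg
    rw [show -(f (-x) * (-1)) = f x by rw [hfeven x]; ring] at h2'
    exact h2'
  have hcontG : ContinuousOn (fun y => -(Faux α σ b (-y))) (Set.Icc (-b) (-σ)) := by
    apply ContinuousOn.neg
    apply hcont.comp continuous_neg.continuousOn
    intro x hx
    simp only [Set.mem_Icc] at hx ⊢
    exact ⟨by linarith [hx.2], by linarith [hx.1]⟩
  have hposG : ∀ x ∈ Set.Ioo (-b) (-σ), 0 ≤ f x := fun x hx =>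
    hnonneg x (Or.inl ⟨hx.1.le, hx.2.le⟩)
  have hintG : IntegrableOn f (Set.Ioc (-b) (-σ)) :=
    intervalIntegral.integrableOn_deriv_of_nonneg hcontG hderivG hposG
  have hiiG : IntervalIntegrable f volume (-b) (-σ) :=
    (intervalIntegrable_iff_integrableOn_Ioc_of_le (by linarith)).mpr hintG
  have hIccIntG : IntegrableOn f (Set.Icc (-b) (-σ)) := by
    rw [integrableOn_Icc_iff_integrableOn_Ioc]; exact hintG
  have hIccValG : ∫ x in Set.Icc (-b) (-σ), f x
      = -(Faux α σ b σ) - -(Faux α σ b b) := by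
    rw [MeasureTheory.integral_Icc_eq_integral_Ioc,
      ← intervalIntegral.integral_of_le (by linarith : -b ≤ -σ)]
    have := intervalIntegral.integral_eq_sub_of_hasDeriv_right_of_le (by linarith : -b ≤ -σ)
      hcontG (fun x hx => (hderivG x hx).hasDerivWithinAt) hiiG
    simpa using this
  have hdisj : Disjoint (Set.Icc (-b) (-σ)) (Set.Icc σ b) := by
    apply Set.disjoint_left.mpr
    rintro x ⟨_, h2'⟩ ⟨h3', _⟩
    linarith
  rw [MeasureTheory.setIntegral_union hdisj measurableSet_Icc hIccIntG hIccInt,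
    hIccVal, hIccValG, Faux_at_b, Faux_at_σ α σ b hσ hbσ]
  have key : b^3 + 2*α*σ - σ^2*b - 2*α*b - 2*b = 0 := by
    have h2' := h2
    field_simp at h2'
    linarith
  have hπ : (0:ℝ) < π := Real.pi_pos
  field_simp
  linear_combination 2 * key
end

section
/- For α > 0, set b₀ = √(1 + α + √(1+2α)) and σ₀ = √(1 + α - √(1+2α)). Then 0 < σ₀ < b₀, b₀² σ₀² = α², b₀² + σ₀² = 2(1+α), and the function f(x) = (1/(π|x|))√((b₀²-x²)(x²-σ₀²)) is a probability density on [-b₀,-σ₀] ∪ [σ₀, b₀]. -/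
open MeasureTheory Real

lemma aux_hasDerivAt (c g R x : ℝ) (hRpos : 0 < R) (hg : 0 < g)
    (hcg : c^2 = g^2 + R^2) (hx : 0 < x) (hs : (x^2 - c)^2 < R^2) :
    HasDerivAt (fun y : ℝ => Real.sqrt (R^2 - (y^2-c)^2)
      + c * Real.arcsin ((y^2-c)/R) - g * Real.arcsin (c/R - g^2/(R*y^2)))
      ((2/x) * Real.sqrt (R^2 - (x^2-c)^2)) x := by
  have hDpos : 0 < R^2 - (x^2-c)^2 := by nlinarith
  set D := R^2 - (x^2-c)^2 with hD
  set S := Real.sqrt D with hSdef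
  have hSpos : 0 < S := Real.sqrt_pos.mpr hDpos
  have hS2 : S^2 = D := Real.sq_sqrt hDpos.le
  have hSne : S ≠ 0 := hSpos.ne'
  have hxne : x ≠ 0 := hx.ne'
  have hRne : R ≠ 0 := hRpos.ne'
  have hin : HasDerivAt (fun y : ℝ => y^2 - c) (2*x) x := by
    simpa using (hasDerivAt_pow 2 x).sub_const c
  -- part 1
  have h1 : HasDerivAt (fun y : ℝ => Real.sqrt (R^2 - (y^2-c)^2)) (-2*x*(x^2-c)/S) x := by
    have hu : HasDerivAt (fun y : ℝ => R^2 - (y^2-c)^2) (-(2*(x^2-c)^1*(2*x))) x :=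
      (hin.pow 2).const_sub (R^2)
    have := hu.sqrt (by rw [← hD]; exact hDpos.ne')
    convert this using 1
    rw [← hD, ← hSdef]
    field_simp
  -- part 2
  have hv2 : ((x^2-c)/R)^2 < 1 := by
    rw [div_pow, div_lt_one (by positivity)]; exact hs
  have hvne1 : (x^2-c)/R ≠ 1 := by intro h; rw [h] at hv2; norm_num at hv2
  have hvnem1 : (x^2-c)/R ≠ -1 := by intro h; rw [h] at hv2; norm_num at hv2
  have hsq1 : Real.sqrt (1 - ((x^2-c)/R)^2) = S/R := by
    rw [show 1 - ((x^2-c)/R)^2 = D/R^2 by rw [hD]; field_simp,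
      Real.sqrt_div hDpos.le, Real.sqrt_sq hRpos.le, ← hSdef]
  have h2 : HasDerivAt (fun y : ℝ => c * Real.arcsin ((y^2-c)/R)) (2*c*x/S) x := by
    have hv : HasDerivAt (fun y : ℝ => (y^2-c)/R) (2*x/R) x := hin.div_const R
    have harc := ((Real.hasDerivAt_arcsin hvnem1 hvne1).comp x hv).const_mul c
    refine harc.congr_deriv (Eq.symm ?_)
    rw [hsq1]
    field_simp
  -- part 3
  set w : ℝ := c/R - g^2/(R*x^2) with hwdef
  have hw2 : 1 - w^2 = g^2*D/(R^2*x^4) := by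
    rw [hwdef, hD]
    field_simp
    linear_combination (g^2 - x^4) * hcg
  have hw2pos : 0 < 1 - w^2 := by rw [hw2]; positivity
  have hwne1 : w ≠ 1 := by intro h; rw [h] at hw2pos; norm_num at hw2pos
  have hwnem1 : w ≠ -1 := by intro h; rw [h] at hw2pos; norm_num at hw2pos
  have hsqw : Real.sqrt (1 - w^2) = g*S/(R*x^2) := by
    rw [hw2, show g^2*D/(R^2*x^4) = (g*S/(R*x^2))^2 by
        rw [div_pow, mul_pow, mul_pow, hS2]; ring,
      Real.sqrt_sq (by positivity)]
  have h3 : HasDerivAt (fun y : ℝ => g * Real.arcsin (c/R - g^2/(R*y^2))) (2*g^2/(x*S)) x := by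
    have hq : HasDerivAt (fun y : ℝ => R*y^2) (R*(2*x)) x := by
      simpa using (hasDerivAt_pow 2 x).const_mul R
    have hinv := hq.inv (by positivity : R*x^2 ≠ 0)
    have hw' : HasDerivAt (fun y : ℝ => c/R - g^2/(R*y^2)) (2*g^2/(R*x^3)) x := by
      have h := (hinv.const_mul (g^2)).const_sub (c/R)
      have heq : (fun y : ℝ => c/R - g^2/(R*y^2)) = fun y : ℝ => c/R - g^2 * (R*y^2)⁻¹ := by
        funext y; simp [div_eq_mul_inv]
      rw [heq]
      refine h.congr_deriv (Eq.symm ?_)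
      field_simp
    have harc := ((Real.hasDerivAt_arcsin hwnem1 hwne1).comp x hw').const_mul g
    refine harc.congr_deriv (Eq.symm ?_)
    rw [hsqw]
    field_simp
  have hfin := (h1.add h2).sub h3
  refine hfin.congr_deriv (Eq.symm ?_)
  field_simp
  linear_combination hS2 - hcg + (1 - 2*x*S^2) * hD

set_option maxHeartbeats 1000000 in
/-- For `α > 0`, with `b₀ = √(1+α+√(1+2α))` and
`σ₀ = √(1+α-√(1+2α))`, one has `0 < σ₀ < b₀`, `b₀²σ₀² = α²`,
`b₀² + σ₀² = 2(1+α)`, and `f(x) = (1/(π|x|))√((b₀²-x²)(x²-σ₀²))` is a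
probability density on `[-b₀,-σ₀] ∪ [σ₀,b₀]`. -/
theorem symmetric_genHermite_limit_density
    (α b₀ σ₀ : ℝ) (hα : 0 < α)
    (hb : b₀ = Real.sqrt (1 + α + Real.sqrt (1 + 2*α)))
    (hσ : σ₀ = Real.sqrt (1 + α - Real.sqrt (1 + 2*α)))
    (f : ℝ → ℝ)
    (hf : ∀ x, f x = (1/(π*|x|)) * Real.sqrt ((b₀^2 - x^2)*(x^2 - σ₀^2))) :
    0 < σ₀ ∧ σ₀ < b₀ ∧ b₀^2 * σ₀^2 = α^2 ∧ b₀^2 + σ₀^2 = 2*(1+α) ∧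
    (∀ x ∈ Set.Icc (-b₀) (-σ₀) ∪ Set.Icc σ₀ b₀, 0 ≤ f x) ∧
    (∫ x in Set.Icc (-b₀) (-σ₀) ∪ Set.Icc σ₀ b₀, f x) = 1 := by
  have hπ : (0:ℝ) < π := Real.pi_pos
  set R := Real.sqrt (1+2*α) with hRdef
  have hRpos : 0 < R := Real.sqrt_pos.mpr (by linarith)
  have hRne : R ≠ 0 := hRpos.ne'
  have hR2 : R^2 = 1+2*α := Real.sq_sqrt (by linarith)
  set c : ℝ := 1+α with hcdef
  have hcpos : 0 < c := by rw [hcdef]; linarith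
  have hcR : R < c := by nlinarith [hR2, hRpos, hcpos]
  have hcg : c^2 = α^2 + R^2 := by rw [hR2, hcdef]; ring
  have hb2 : b₀^2 = c + R := by
    rw [hb, hcdef]; rw [show 1 + α + Real.sqrt (1+2*α) = 1 + α + R from rfl]
    exact Real.sq_sqrt (by linarith)
  have hσ2 : σ₀^2 = c - R := by
    rw [hσ, hcdef]; rw [show 1 + α - Real.sqrt (1+2*α) = 1 + α - R from rfl]
    exact Real.sq_sqrt (by linarith)
  have hσpos : 0 < σ₀ := by
    rw [hσ]; exact Real.sqrt_pos.mpr (by linarith)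
  have hbpos : 0 < b₀ := by
    rw [hb]; exact Real.sqrt_pos.mpr (by linarith)
  have hσb : σ₀ < b₀ := by
    rw [hσ, hb]; exact Real.sqrt_lt_sqrt (by linarith) (by linarith)
  have hprod : b₀^2 * σ₀^2 = α^2 := by rw [hb2, hσ2]; nlinarith [hR2]
  have hsum : b₀^2 + σ₀^2 = 2*(1+α) := by rw [hb2, hσ2, hcdef]; ring
  have hnn : ∀ x, 0 ≤ f x := fun x => by rw [hf x]; positivity
  refine ⟨hσpos, hσb, hprod, hsum, fun x _ => hnn x, ?_⟩
  -- the antiderivative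
  set F : ℝ → ℝ := fun x => (1/(2*π)) * (Real.sqrt (R^2 - (x^2-c)^2)
      + c * Real.arcsin ((x^2-c)/R) - α * Real.arcsin (c/R - α^2/(R*x^2))) with hFdef
  -- continuity of f away from 0
  have hfc : ContinuousOn f {x : ℝ | x ≠ 0} := by
    have hfeq : f = fun x => (1/(π*|x|)) * Real.sqrt ((b₀^2 - x^2)*(x^2 - σ₀^2)) :=
      funext hf
    rw [hfeq]
    apply ContinuousOn.mul
    · apply ContinuousOn.div continuousOn_const
      · exact (continuous_const.mul continuous_abs).continuousOn
      · intro x hx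
        simp only [Set.mem_setOf_eq] at hx
        positivity
    · exact (Real.continuous_sqrt.comp
        ((continuous_const.sub (continuous_pow 2)).mul
          ((continuous_pow 2).sub continuous_const))).continuousOn
  have hsubpos : Set.Icc σ₀ b₀ ⊆ {x : ℝ | x ≠ 0} := by
    intro x hx; simp only [Set.mem_setOf_eq]
    have := hx.1; intro h; rw [h] at this; linarith
  have hsubneg : Set.Icc (-b₀) (-σ₀) ⊆ {x : ℝ | x ≠ 0} := by
    intro x hx; simp only [Set.mem_setOf_eq]
    have := hx.2; intro h; rw [h] at this; linarith
  have hint_pos : IntegrableOn f (Set.Icc σ₀ b₀) volume :=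
    (hfc.mono hsubpos).integrableOn_Icc
  have hint_neg : IntegrableOn f (Set.Icc (-b₀) (-σ₀)) volume :=
    (hfc.mono hsubneg).integrableOn_Icc
  -- derivative of F on Ioo
  have key : ∀ x ∈ Set.Ioo σ₀ b₀, HasDerivAt F (f x) x := by
    intro x hx
    have hx0 : 0 < x := lt_trans hσpos hx.1
    have hs : (x^2-c)^2 < R^2 := by
      have h1 : σ₀^2 < x^2 := by nlinarith [hx.1, hσpos]
      have h2 : x^2 < b₀^2 := by nlinarith [hx.2, hx0]
      rw [hσ2] at h1; rw [hb2] at h2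
      nlinarith
    have h := (aux_hasDerivAt c α R x hRpos hα hcg hx0 hs).const_mul (1/(2*π))
    rw [hFdef]
    refine h.congr_deriv (Eq.symm ?_)
    rw [hf x, abs_of_pos hx0,
      show (b₀^2 - x^2)*(x^2-σ₀^2) = R^2 - (x^2-c)^2 by rw [hb2, hσ2]; ring]
    field_simp
  -- continuity of F
  have hFcont : ContinuousOn F (Set.Icc σ₀ b₀) := by
    rw [hFdef]
    apply ContinuousOn.mul continuousOn_const
    apply ContinuousOn.sub
    · apply ContinuousOn.add
      · exact (Real.continuous_sqrt.comp
          (continuous_const.sub (((continuous_pow 2).sub continuous_const).pow 2))).continuousOn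
      · exact continuousOn_const.mul
          ((Real.continuous_arcsin.comp
            (((continuous_pow 2).sub continuous_const).div_const R)).continuousOn)
    · apply continuousOn_const.mul
      apply Real.continuous_arcsin.comp_continuousOn
      apply ContinuousOn.sub continuousOn_const
      apply ContinuousOn.div continuousOn_const
        (continuous_const.mul (continuous_pow 2)).continuousOn
      intro x hx
      have hx0 : 0 < x := lt_of_lt_of_le hσpos hx.1
      exact (mul_pos hRpos (pow_pos hx0 2)).ne'
  have hii : IntervalIntegrable f volume σ₀ b₀ := by
    apply ContinuousOn.intervalIntegrable
    rw [Set.uIcc_of_le hσb.le]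
    exact hfc.mono hsubpos
  have hFTC : ∫ x in σ₀..b₀, f x = F b₀ - F σ₀ :=
    intervalIntegral.integral_eq_sub_of_hasDeriv_right_of_le hσb.le hFcont
      (fun x hx => (key x hx).hasDerivWithinAt) hii
  -- values of F at the endpoints
  have hFb : F b₀ = (1/(2*π)) * ((c - α) * (π/2)) := by
    rw [hFdef]
    have e1 : b₀^2 - c = R := by rw [hb2]; ring
    have e3 : c/R - α^2/(R*b₀^2) = 1 := by
      rw [hb2]
      have : c + R ≠ 0 := by positivity
      field_simp
      linear_combination hcg
    simp only [e1, e3, div_self hRne, Real.arcsin_one, sub_self, Real.sqrt_zero]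
    ring
  have hFσ : F σ₀ = (1/(2*π)) * (-((c - α) * (π/2))) := by
    rw [hFdef]
    have e1 : σ₀^2 - c = -R := by rw [hσ2]; ring
    have hσ2ne : c - R ≠ 0 := by linarith
    have e3 : c/R - α^2/(R*σ₀^2) = -1 := by
      rw [hσ2]
      field_simp
      linear_combination hcg
    simp only [e1, e3, Real.arcsin_neg_one]
    rw [show -R/R = -1 by field_simp, Real.arcsin_neg_one,
      show R^2 - (-R)^2 = 0 by ring, Real.sqrt_zero]
    ring
  have hpos_val : ∫ x in Set.Icc σ₀ b₀, f x = 1/2 := by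
    rw [MeasureTheory.integral_Icc_eq_integral_Ioc,
      ← intervalIntegral.integral_of_le hσb.le, hFTC, hFb, hFσ, hcdef]
    field_simp
    ring
  have hneg_val : ∫ x in Set.Icc (-b₀) (-σ₀), f x = ∫ x in Set.Icc σ₀ b₀, f x := by
    rw [MeasureTheory.integral_Icc_eq_integral_Ioc,
      MeasureTheory.integral_Icc_eq_integral_Ioc,
      ← intervalIntegral.integral_of_le (by linarith : -b₀ ≤ -σ₀),
      ← intervalIntegral.integral_of_le hσb.le,
      ← intervalIntegral.integral_comp_neg f]
    apply intervalIntegral.integral_congr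
    intro x _
    show f (-x) = f x
    rw [hf, hf, abs_neg, even_two.neg_pow]
  have hdisj : Disjoint (Set.Icc (-b₀) (-σ₀)) (Set.Icc σ₀ b₀) := by
    apply Set.disjoint_left.mpr
    intro x hx1 hx2
    have h1 := hx1.2; have h2 := hx2.1; linarith
  rw [MeasureTheory.setIntegral_union hdisj measurableSet_Icc hint_neg hint_pos,
    hneg_val, hpos_val]
  norm_num
end

section
/- For σ ≥ 0 and b = √(σ² + 2), the function f(x) = (|x|/π)·√((2 + σ² - x²)/(x² - σ²)) is a probability density on [-b, -σ] ∪ [σ, b]; in particular for σ = 0 it reduces to the semicircle law (1/π)√(2 - x²). -/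
open MeasureTheory Real

set_option maxHeartbeats 1600000 in
/-- For `σ ≥ 0` and `b = √(σ²+2)`, the function
`f(x) = (|x|/π)√((2+σ²-x²)/(x²-σ²))` is a probability density on
`[-b,-σ] ∪ [σ,b]`; for `σ = 0` it reduces to the semicircle law. -/
theorem truncated_symmetric_hermite_limit_density
    (σ b : ℝ) (hσ : 0 ≤ σ) (hb : b = Real.sqrt (σ^2 + 2))
    (f : ℝ → ℝ)
    (hf : ∀ x, f x = (|x|/π) * Real.sqrt ((2 + σ^2 - x^2)/(x^2 - σ^2))) :
    (∀ x ∈ Set.Icc (-b) (-σ) ∪ Set.Icc σ b, 0 ≤ f x) ∧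
    (∫ x in Set.Icc (-b) (-σ) ∪ Set.Icc σ b, f x) = 1 ∧
    (σ = 0 → ∀ x : ℝ, x ≠ 0 → f x = (1/π) * Real.sqrt (2 - x^2)) := by
  have hπ : (0:ℝ) < π := Real.pi_pos
  have hb2 : b^2 = σ^2 + 2 := by
    rw [hb]; exact Real.sq_sqrt (by positivity)
  have hσb : σ < b := by
    have h1 : σ = Real.sqrt (σ^2) := (Real.sqrt_sq hσ).symm
    rw [h1, hb]; exact Real.sqrt_lt_sqrt (by positivity) (by linarith)
  have hb0 : 0 < b := lt_of_le_of_lt hσ hσb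
  have hnonneg : ∀ x, 0 ≤ f x := fun x => by rw [hf]; positivity
  -- the antiderivative
  set F : ℝ → ℝ := fun x =>
    (1/(2*π)) * Real.arcsin (x^2 - σ^2 - 1)
      + (1/(2*π)) * Real.sqrt ((x^2 - σ^2)*(2 + σ^2 - x^2)) with hFdef
  have hFcont : Continuous F := by
    apply Continuous.add
    · exact continuous_const.mul (Real.continuous_arcsin.comp (by continuity))
    · exact continuous_const.mul (Real.continuous_sqrt.comp (by continuity))
  have hderiv : ∀ x ∈ Set.Ioo σ b, HasDerivAt F (f x) x := by
    intro x hx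
    have hx0 : 0 < x := lt_of_le_of_lt hσ hx.1
    have h1 : σ^2 < x^2 := by nlinarith [hx.1, hx.2]
    have h2 : x^2 < σ^2 + 2 := by nlinarith [hx.2]
    set A := Real.sqrt (x^2 - σ^2) with hAdef
    set B := Real.sqrt (2 + σ^2 - x^2) with hBdef
    have hA : 0 < A := Real.sqrt_pos.mpr (by linarith)
    have hB : 0 < B := Real.sqrt_pos.mpr (by linarith)
    have hA2 : A^2 = x^2 - σ^2 := Real.sq_sqrt (by linarith)
    have hB2 : B^2 = 2 + σ^2 - x^2 := Real.sq_sqrt (by linarith)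
    -- inner function y ↦ y^2 - σ^2 - 1
    have hsq : HasDerivAt (fun y : ℝ => y^2) (2*x) x := by
      simpa using hasDerivAt_pow 2 x
    have hinner : HasDerivAt (fun y : ℝ => y^2 - σ^2 - 1) (2*x) x :=
      (hsq.sub_const (σ^2)).sub_const 1
    -- arcsin part
    have ht1 : x^2 - σ^2 - 1 ≠ -1 := by intro h; linarith
    have ht2 : x^2 - σ^2 - 1 ≠ 1 := by intro h; linarith
    have harc : HasDerivAt (fun y : ℝ => Real.arcsin (y^2 - σ^2 - 1))
        (1 / Real.sqrt (1 - (x^2 - σ^2 - 1)^2) * (2*x)) x :=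
      (Real.hasDerivAt_arcsin ht1 ht2).comp (h₂ := Real.arcsin) x hinner
    have hsqrt1 : Real.sqrt (1 - (x^2 - σ^2 - 1)^2) = A * B := by
      rw [show 1 - (x^2 - σ^2 - 1)^2 = (A*B)^2 by linear_combination (-(2+σ^2-x^2))*hA2 - A^2*hB2]
      exact Real.sqrt_sq (by positivity)
    -- sqrt part
    have hPpos : 0 < (x^2 - σ^2)*(2 + σ^2 - x^2) := mul_pos (by linarith) (by linarith)
    have hPder : HasDerivAt (fun y : ℝ => (y^2 - σ^2)*(2 + σ^2 - y^2))
        ((2*x)*(2 + σ^2 - x^2) + (x^2 - σ^2)*(-(2*x))) x := by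
      exact (hsq.sub_const (σ^2)).mul ((hsq.const_sub (2 + σ^2)))
    have hsqrtP : HasDerivAt (fun y : ℝ => Real.sqrt ((y^2 - σ^2)*(2 + σ^2 - y^2)))
        (1 / (2 * Real.sqrt ((x^2 - σ^2)*(2 + σ^2 - x^2)))
          * ((2*x)*(2 + σ^2 - x^2) + (x^2 - σ^2)*(-(2*x)))) x :=
      (Real.hasDerivAt_sqrt (ne_of_gt hPpos)).comp x hPder
    have hsqrtPval : Real.sqrt ((x^2 - σ^2)*(2 + σ^2 - x^2)) = A * B := by
      rw [show (x^2 - σ^2)*(2 + σ^2 - x^2) = (A*B)^2 by linear_combination (-(2+σ^2-x^2))*hA2 - A^2*hB2]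
      exact Real.sqrt_sq (by positivity)
    have hFder := ((harc.const_mul (1/(2*π))).add (hsqrtP.const_mul (1/(2*π))))
    refine hFder.congr_deriv (Eq.symm ?_)
    rw [hf, hsqrt1, hsqrtPval, abs_of_pos hx0]
    have hfrac : Real.sqrt ((2 + σ^2 - x^2)/(x^2 - σ^2)) = B / A := by
      rw [Real.sqrt_div (by linarith) _]
    rw [hfrac]
    rw [show x^2 - σ^2 = A^2 from hA2.symm, show 2 + σ^2 - x^2 = B^2 from hB2.symm]
    have habs2 : A^2 + B^2 = 2 := by rw [hA2, hB2]; ring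
    field_simp
    linear_combination habs2
  have hint : IntegrableOn f (Set.Ioc σ b) :=
    intervalIntegral.integrableOn_deriv_of_nonneg hFcont.continuousOn hderiv
      (fun x _ => hnonneg x)
  have hII : IntervalIntegrable f volume σ b := by
    rw [intervalIntegrable_iff_integrableOn_Ioc_of_le hσb.le]; exact hint
  have hFσ : F σ = -(1/4) := by
    simp only [hFdef]
    rw [show σ^2 - σ^2 - 1 = -1 by ring, Real.arcsin_neg_one,
      show (σ^2 - σ^2)*(2 + σ^2 - σ^2) = 0 by ring, Real.sqrt_zero]
    field_simp
    ring
  have hFb : F b = 1/4 := by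
    simp only [hFdef]
    rw [show b^2 - σ^2 - 1 = 1 by rw [hb2]; ring, Real.arcsin_one,
      show (b^2 - σ^2)*(2 + σ^2 - b^2) = (b^2 - σ^2) * 0 by rw [hb2]; ring,
      mul_zero, Real.sqrt_zero]
    field_simp
    ring
  have hval : ∫ x in σ..b, f x = 1/2 := by
    rw [intervalIntegral.integral_eq_sub_of_hasDerivAt_of_le hσb.le hFcont.continuousOn
      hderiv hII, hFb, hFσ]
    norm_num
  have heq1 : ∫ x in Set.Icc σ b, f x = 1/2 := by
    rw [MeasureTheory.integral_Icc_eq_integral_Ioc, ← intervalIntegral.integral_of_le hσb.le]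
    exact hval
  have hf_even : ∀ x, f (-x) = f x := fun x => by rw [hf, hf]; simp [neg_sq]
  have heq2 : ∫ x in Set.Icc (-b) (-σ), f x = 1/2 := by
    rw [MeasureTheory.integral_Icc_eq_integral_Ioc,
      ← intervalIntegral.integral_of_le (by linarith : -b ≤ -σ)]
    rw [← intervalIntegral.integral_comp_neg f]
    simp_rw [hf_even]
    exact hval
  have hII2 : IntervalIntegrable f volume (-b) (-σ) := by
    have h2 := (IntervalIntegrable.iff_comp_neg (f := f) (a := σ) (b := b)).mp hII
    simp_rw [hf_even] at h2
    exact h2.symm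
  have hint1 : IntegrableOn f (Set.Icc σ b) := by
    rw [integrableOn_Icc_iff_integrableOn_Ioc]; exact hint
  have hint2 : IntegrableOn f (Set.Icc (-b) (-σ)) := by
    rw [integrableOn_Icc_iff_integrableOn_Ioc]
    exact (intervalIntegrable_iff_integrableOn_Ioc_of_le (by linarith)).mp hII2
  refine ⟨fun x _ => hnonneg x, ?_, ?_⟩
  · have hdisj : AEDisjoint volume (Set.Icc (-b) (-σ)) (Set.Icc σ b) := by
      refine measure_mono_null ?_ (measure_singleton (0:ℝ))
      rintro x ⟨⟨_, hx1⟩, hx2, _⟩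
      have hσ0 : σ = 0 := by linarith
      simp only [Set.mem_singleton_iff]
      rw [hσ0] at hx1 hx2; linarith
    rw [MeasureTheory.integral_union_ae hdisj measurableSet_Icc.nullMeasurableSet hint2 hint1,
      heq2, heq1]
    norm_num
  · intro h0 x hx
    rw [hf, h0]
    rcases le_or_gt 0 (2 - x^2) with h2 | h2
    · rw [show (2:ℝ) + 0^2 - x^2 = 2 - x^2 by ring, show x^2 - 0^2 = x^2 by ring,
        Real.sqrt_div h2, Real.sqrt_sq_eq_abs]
      have hxa : |x| ≠ 0 := abs_ne_zero.mpr hx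
      field_simp
    · rw [show (2:ℝ) + 0^2 - x^2 = 2 - x^2 by ring, show x^2 - 0^2 = x^2 by ring]
      have hx2 : 0 < x^2 := by positivity
      have hd : (2 - x^2)/x^2 ≤ 0 := div_nonpos_of_nonpos_of_nonneg h2.le (sq_nonneg x)
      rw [Real.sqrt_eq_zero_of_nonpos hd, Real.sqrt_eq_zero_of_nonpos h2.le]
      ring
end
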